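/- Strong convergence of resolvents implies strong convergence of the approximating forms applied to restrictions: if E_k G_λ^{(k)} π_k f → G_λ f in H for every f ∈ H and λ > 0, then lim_{k→∞} a_λ^{(k)}(π_k u, π_k u) = a_λ(u, u) for every u ∈ H and λ > 0, where a_λ^{(k)}(v, v) = λ⟨v − λ G_λ^{(k)} v, v⟩_k and a_λ(u, u) = λ⟨u − λ G_λ u, u⟩. -/

import Mathlib

open Filter
open scoped Topology

/-- Strong convergence of the resolvents `E_k G_λ^{(k)} π_k → G_λ` implies
convergence of the approximating forms on restrictions:
`a_λ^{(k)}(π_k u, π_k u) = λ⟨π_k u - λ G_λ^{(k)} π_k u, π_k u⟩_k` converges to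
`a_λ(u,u) = λ⟨u - λ G_λ u, u⟩` for every `u ∈ H` and `λ > 0`. -/
theorem stmt14 {H : Type*} [NormedAddCommGroup H] [InnerProductSpace ℝ H]
    [CompleteSpace H]
    {Hk : ℕ → Type*} [∀ k, NormedAddCommGroup (Hk k)]
    [∀ k, InnerProductSpace ℝ (Hk k)] [∀ k, CompleteSpace (Hk k)]
    (E : ∀ k, Hk k →L[ℝ] H)
    (hleft : ∀ k (v : Hk k), (ContinuousLinearMap.adjoint (E k)) (E k v) = v)
    (hbd : ∃ C : ℝ, ∀ k, ‖ContinuousLinearMap.adjoint (E k)‖ ≤ C)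
    (hinner : ∀ u v : H,
      Tendsto
        (fun k =>
          (inner ℝ ((ContinuousLinearMap.adjoint (E k)) u)
              ((ContinuousLinearMap.adjoint (E k)) v) : ℝ))
        atTop (𝓝 (inner ℝ u v : ℝ)))
    (Gk : ∀ k, ℝ → (Hk k →L[ℝ] Hk k)) (G : ℝ → (H →L[ℝ] H))
    (hcontrk : ∀ k (lam : ℝ), 0 < lam → ∀ v : Hk k,
      lam * ‖Gk k lam v‖ ≤ ‖v‖)
    (hcontr : ∀ lam : ℝ, 0 < lam → ∀ u : H, lam * ‖G lam u‖ ≤ ‖u‖)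
    (hconv : ∀ lam : ℝ, 0 < lam → ∀ f : H,
      Tendsto
        (fun k => E k (Gk k lam ((ContinuousLinearMap.adjoint (E k)) f)))
        atTop (𝓝 (G lam f))) :
    ∀ lam : ℝ, 0 < lam → ∀ u : H,
      Tendsto
        (fun k =>
          lam *
            (inner ℝ
                ((ContinuousLinearMap.adjoint (E k)) u -
                  lam • Gk k lam ((ContinuousLinearMap.adjoint (E k)) u))
                ((ContinuousLinearMap.adjoint (E k)) u) : ℝ))
        atTop (𝓝 (lam * (inner ℝ (u - lam • G lam u) u : ℝ))) := by

  intro lam hlam u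
  obtain ⟨C, hC⟩ := hbd
  have hC0 : 0 ≤ C := le_trans (norm_nonneg _) (hC 0)
  set g := G lam u with hg
  have hfg : Tendsto
      (fun k => E k (Gk k lam ((ContinuousLinearMap.adjoint (E k)) u)))
      atTop (𝓝 g) := hconv lam hlam u
  -- key convergence: ⟨π_k f_k, π_k u⟩ → ⟨g, u⟩
  have h2 : Tendsto
      (fun k => (inner ℝ ((ContinuousLinearMap.adjoint (E k))
          (E k (Gk k lam ((ContinuousLinearMap.adjoint (E k)) u))))
        ((ContinuousLinearMap.adjoint (E k)) u) : ℝ))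
      atTop (𝓝 (inner ℝ g u : ℝ)) := by
    have hdiff : Tendsto
        (fun k => (inner ℝ ((ContinuousLinearMap.adjoint (E k))
            (E k (Gk k lam ((ContinuousLinearMap.adjoint (E k)) u)) - g))
          ((ContinuousLinearMap.adjoint (E k)) u) : ℝ)) atTop (𝓝 0) := by
      have hn : Tendsto (fun k =>
          C * ‖E k (Gk k lam ((ContinuousLinearMap.adjoint (E k)) u)) - g‖ * (C * ‖u‖))
          atTop (𝓝 0) := by
        have := (tendsto_iff_norm_sub_tendsto_zero.mp hfg)
        have h := ((this.const_mul C).mul_const (C * ‖u‖))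
        simpa using h
      refine squeeze_zero_norm (fun k => ?_) hn
      calc ‖(inner ℝ ((ContinuousLinearMap.adjoint (E k))
            (E k (Gk k lam ((ContinuousLinearMap.adjoint (E k)) u)) - g))
          ((ContinuousLinearMap.adjoint (E k)) u) : ℝ)‖
          ≤ ‖(ContinuousLinearMap.adjoint (E k))
              (E k (Gk k lam ((ContinuousLinearMap.adjoint (E k)) u)) - g)‖ *
            ‖(ContinuousLinearMap.adjoint (E k)) u‖ := by
            rw [Real.norm_eq_abs]; exact abs_real_inner_le_norm _ _
        _ ≤ (C * ‖E k (Gk k lam ((ContinuousLinearMap.adjoint (E k)) u)) - g‖) * (C * ‖u‖) := by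
            apply mul_le_mul
            · exact le_trans ((ContinuousLinearMap.adjoint (E k)).le_opNorm _)
                (mul_le_mul_of_nonneg_right (hC k) (norm_nonneg _))
            · exact le_trans ((ContinuousLinearMap.adjoint (E k)).le_opNorm _)
                (mul_le_mul_of_nonneg_right (hC k) (norm_nonneg _))
            · exact norm_nonneg _
            · positivity
    have hsum := hdiff.add (hinner g u)
    rw [zero_add] at hsum
    refine hsum.congr fun k => ?_
    rw [← inner_add_left]
    congr 1
    simp
  -- now combine
  have hmain : Tendsto
      (fun k =>
        lam * ((inner ℝ ((ContinuousLinearMap.adjoint (E k)) u)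
            ((ContinuousLinearMap.adjoint (E k)) u) : ℝ) -
          lam * (inner ℝ ((ContinuousLinearMap.adjoint (E k))
              (E k (Gk k lam ((ContinuousLinearMap.adjoint (E k)) u))))
            ((ContinuousLinearMap.adjoint (E k)) u) : ℝ)))
      atTop (𝓝 (lam * ((inner ℝ u u : ℝ) - lam * (inner ℝ g u : ℝ)))) :=
    ((hinner u u).sub (h2.const_mul lam)).const_mul lam
  have heq : (lam * ((inner ℝ u u : ℝ) - lam * (inner ℝ g u : ℝ)))
      = lam * (inner ℝ (u - lam • G lam u) u : ℝ) := by
    rw [inner_sub_left, real_inner_smul_left]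
  rw [heq] at hmain
  refine hmain.congr fun k => ?_
  congr 1
  rw [inner_sub_left, real_inner_smul_left, hleft]
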